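/- Let G be a t.d.l.c. group in which every proper open commensurated subgroup is compact, and let φ : G → H be a continuous group homomorphism into a t.d.l.c. group H. Then the image of φ is closed in H. -/

import Mathlib

def conjS {G : Type*} [Group G] (g : G) (H : Subgroup G) : Subgroup G :=
  H.map (MulAut.conj g).toMonoidHom

def Commensurated {G : Type*} [Group G] (H : Subgroup G) : Prop :=
  ∀ g : G, (conjS g H ⊓ H).relIndex H ≠ 0

open Set Filter Topology Pointwise

lemma mem_conjS {G : Type*} [Group G] {g x : G} {S : Subgroup G} :
    x ∈ conjS g S ↔ g⁻¹ * x * g ∈ S := by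
  constructor
  · rintro ⟨y, hy, rfl⟩
    simpa [MulAut.conj_apply, mul_assoc] using hy
  · intro h
    refine ⟨g⁻¹ * x * g, h, ?_⟩
    show g * (g⁻¹ * x * g) * g⁻¹ = x
    group

/-- Local (compact-neighborhood) version of `TopologicalGroup.exist_mul_closure_nhd`. -/
lemma exist_mul_closure_nhd' {G : Type*} [Group G] [TopologicalSpace G] [IsTopologicalGroup G]
    {W : Set G} (Wcompact : IsCompact W) (Wopen : IsOpen W) :
    ∃ T ∈ 𝓝 (1 : G), W * T ⊆ W := by
  apply Wcompact.induction_on (p := fun S ↦ ∃ T ∈ 𝓝 (1 : G), S * T ⊆ W)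
    ⟨Set.univ, by simp only [univ_mem, empty_mul, empty_subset, and_self]⟩
    (fun _ _ huv ⟨T, hT, mem⟩ ↦ ⟨T, hT, (mul_subset_mul_right huv).trans mem⟩)
    fun U V ⟨T₁, hT₁, mem1⟩ ⟨T₂, hT₂, mem2⟩ ↦ ⟨T₁ ∩ T₂, inter_mem hT₁ hT₂, by
      rw [union_mul]
      exact union_subset (mul_subset_mul_left inter_subset_left |>.trans mem1)
        (mul_subset_mul_left inter_subset_right |>.trans mem2)⟩
  intro x memW
  have : (x, 1) ∈ (fun p : G × G ↦ p.1 * p.2) ⁻¹' W := by simp [memW]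
  rcases isOpen_prod_iff.mp (continuous_mul.isOpen_preimage W Wopen) x 1 this with
    ⟨U, V, Uopen, Vopen, xmemU, onememV, prodsub⟩
  have h6 : U * V ⊆ W := mul_subset_iff.mpr (fun _ hx _ hy ↦ prodsub (mk_mem_prod hx hy))
  exact ⟨U ∩ W, ⟨U, Uopen.mem_nhds xmemU, W, fun _ a ↦ a, rfl⟩,
    V, Vopen.mem_nhds onememV, fun _ a ↦ h6 ((mul_subset_mul_right inter_subset_left) a)⟩

/-- Van Dantzig: in a t.d.l.c. group, every open neighborhood of `1` contains a
compact open subgroup. -/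
lemma exists_compact_open_subgroup {G : Type*} [Group G] [TopologicalSpace G]
    [IsTopologicalGroup G] [LocallyCompactSpace G] [T2Space G] [TotallyDisconnectedSpace G]
    {U : Set G} (hU : IsOpen U) (h1 : (1 : G) ∈ U) :
    ∃ S : Subgroup G, IsOpen (S : Set G) ∧ IsCompact (S : Set G) ∧ (S : Set G) ⊆ U := by
  obtain ⟨K, Kcomp, hK1, hKU⟩ := exists_compact_subset hU h1
  obtain ⟨W, Wclopen, hW1, hWsub⟩ :=
    (loc_compact_Haus_tot_disc_of_zero_dim (H := G)).exists_subset_of_mem_open hK1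
      isOpen_interior
  have Wcompact : IsCompact W := Kcomp.of_isClosed_subset Wclopen.isClosed
    (hWsub.trans interior_subset)
  have einW : (1 : G) ∈ W := hW1
  obtain ⟨T, Tmem, mulclose⟩ := exist_mul_closure_nhd' Wcompact Wclopen.isOpen
  rcases mem_nhds_iff.mp Tmem with ⟨U', UsubT, Uopen, onememU⟩
  set V : Set G := U' ∩ U'⁻¹ with hVdef
  have hVnhd : (1 : G) ∈ V := ⟨onememU, by simpa using onememU⟩
  have hVinv : V⁻¹ = V := by simp [hVdef, Set.inter_comm]
  have hVopen : IsOpen V := Uopen.inter Uopen.inv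
  have hVmul : W * V ⊆ W := fun a ha ↦
    mulclose (mul_subset_mul_left UsubT (mul_subset_mul_left inter_subset_left ha))
  let S : Subgroup G := {
    carrier := ⋃ n, V ^ (n + 1)
    mul_mem' := fun ha hb ↦ by
      rcases mem_iUnion.mp ha with ⟨k, hk⟩
      rcases mem_iUnion.mp hb with ⟨l, hl⟩
      apply mem_iUnion.mpr
      use k + 1 + l
      rw [add_assoc, pow_add]
      exact Set.mul_mem_mul hk hl
    one_mem' := by
      apply mem_iUnion.mpr
      use 0
      simpa using hVnhd
    inv_mem' := fun ha ↦ by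
      rcases mem_iUnion.mp ha with ⟨k, hk⟩
      apply mem_iUnion.mpr
      use k
      rw [← hVinv]
      simpa only [inv_pow, Set.mem_inv, inv_inv] using hk }
  have Sopen : IsOpen (S : Set G) := by
    refine isOpen_iUnion (fun n ↦ ?_)
    rw [pow_succ]
    exact hVopen.mul_left
  have mulVpow (n : ℕ) : W * V ^ (n + 1) ⊆ W := by
    induction' n with n ih
    · simpa using hVmul
    · rw [pow_succ, ← mul_assoc]
      exact (Set.mul_subset_mul_right ih).trans hVmul
  have hSW : (S : Set G) ⊆ W := by
    intro x hx
    rcases mem_iUnion.mp hx with ⟨n, hn⟩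
    exact mulVpow n ⟨1, einW, x, hn, one_mul x⟩
  refine ⟨S, Sopen, ?_, hSW.trans ((hWsub.trans interior_subset).trans hKU)⟩
  exact Kcomp.of_isClosed_subset (S.isClosed_of_isOpen Sopen)
    (hSW.trans (hWsub.trans interior_subset))

theorem stmt_9 {G H : Type*}
    [Group G] [TopologicalSpace G] [IsTopologicalGroup G]
    [LocallyCompactSpace G] [T2Space G] [TotallyDisconnectedSpace G]
    [Group H] [TopologicalSpace H] [IsTopologicalGroup H]
    [LocallyCompactSpace H] [T2Space H] [TotallyDisconnectedSpace H]
    (hyp : ∀ U : Subgroup G, IsOpen (U : Set G) → Commensurated U → U ≠ ⊤ →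
      IsCompact (U : Set G))
    (φ : G →* H) (hφ : Continuous φ) :
    IsClosed (Set.range φ) := by
  by_cases hd : ∃ h ∈ closure (Set.range φ), h ≠ 1
  · obtain ⟨d, hdcl, hdne⟩ := hd
    obtain ⟨W, Wopen, Wcomp, hWd⟩ := exists_compact_open_subgroup (G := H)
      (U := ({d}ᶜ : Set H)) isClosed_singleton.isOpen_compl (by simpa using hdne.symm)
    have hdW : d ∉ (W : Set H) := fun h => hWd h rfl
    set U : Subgroup G := W.comap φ with hU
    have Uopen : IsOpen (U : Set G) := Wopen.preimage hφ
    have Utop : U ≠ ⊤ := by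
      intro h
      have h1 : Set.range φ ⊆ (W : Set H) := by
        rintro _ ⟨g, rfl⟩
        exact Subgroup.mem_comap.mp ((Subgroup.eq_top_iff' U).mp h g)
      have h2 : closure (Set.range φ) ⊆ (W : Set H) :=
        closure_minimal h1 (W.isClosed_of_isOpen Wopen)
      exact hdW (h2 hdcl)
    have Ucomm : Commensurated U := by
      intro g
      have hc : conjS g U ⊓ U = (conjS (φ g) W ⊓ W).comap φ := by
        rw [Subgroup.comap_inf]
        congr 1
        ext x
        simp only [mem_conjS, hU, Subgroup.mem_comap, map_mul, map_inv]
      rw [hc, hU, Subgroup.relIndex_comap]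
      intro h0
      have h0' : (conjS (φ g) W ⊓ W).relIndex W = 0 :=
        Subgroup.relIndex_eq_zero_of_le_right (Subgroup.map_comap_le φ W) h0
      have hAopen : IsOpen ((conjS (φ g) W ⊓ W : Subgroup H) : Set H) := by
        have e1 : ((conjS (φ g) W : Subgroup H) : Set H)
            = (fun x => (φ g)⁻¹ * x * (φ g)) ⁻¹' (W : Set H) := by
          ext x
          exact mem_conjS
        rw [Subgroup.coe_inf, e1]
        exact (Wopen.preimage (by fun_prop)).inter Wopen
      haveI : CompactSpace (W : Subgroup H) := isCompact_iff_compactSpace.mp Wcomp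
      haveI : Finite ((W : Subgroup H) ⧸ ((conjS (φ g) W ⊓ W).subgroupOf W)) :=
        Subgroup.quotient_finite_of_isOpen _ (Subgroup.subgroupOf_isOpen W _ hAopen)
      have : (conjS (φ g) W ⊓ W).relIndex W ≠ 0 := Subgroup.index_ne_zero_of_finite
      exact this h0'
    have Ucomp : IsCompact (U : Set G) := hyp U Uopen Ucomm Utop
    have key : Set.range φ ∩ (W : Set H) = φ '' (U : Set G) := by
      ext x
      constructor
      · rintro ⟨⟨g, rfl⟩, hxW⟩
        exact ⟨g, hxW, rfl⟩
      · rintro ⟨g, hg, rfl⟩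
        exact ⟨⟨g, rfl⟩, hg⟩
    have hclosed : IsClosed (Set.range φ ∩ (W : Set H)) := by
      rw [key]
      exact (Ucomp.image hφ).isClosed
    apply isClosed_of_closure_subset
    intro h hh
    have hN : {y : H | h⁻¹ * y ∈ W} ∈ 𝓝 h := by
      refine IsOpen.mem_nhds (Wopen.preimage (by fun_prop)) ?_
      simpa using W.one_mem
    obtain ⟨s, hsW, hsr⟩ := mem_closure_iff_nhds.mp hh _ hN
    have h1 : s⁻¹ * h ∈ W := by
      have := W.inv_mem hsW
      simpa [mul_inv_rev] using this
    have h2 : s⁻¹ * h ∈ closure (Set.range φ) := by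
      have hs' : s ∈ φ.range.topologicalClosure := by
        apply φ.range.le_topologicalClosure
        simpa [MonoidHom.coe_range] using hsr
      have hh' : h ∈ φ.range.topologicalClosure := by
        show h ∈ closure (φ.range : Set H)
        simpa [MonoidHom.coe_range] using hh
      have := mul_mem (φ.range.topologicalClosure.inv_mem hs') hh'
      rw [← MonoidHom.coe_range]
      exact this
    have h3 : s⁻¹ * h ∈ Set.range φ ∩ (W : Set H) := by
      have := Wopen.closure_inter (s := Set.range φ) ⟨h2, h1⟩
      rwa [hclosed.closure_eq] at this
    obtain ⟨g, hg⟩ := h3.1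
    obtain ⟨g', hg'⟩ := hsr
    refine ⟨g' * g, ?_⟩
    rw [map_mul, hg, hg', mul_inv_cancel_left]
  · push_neg at hd
    have : Set.range φ = {1} := by
      apply subset_antisymm
      · intro x hx
        exact hd x (subset_closure hx)
      · rintro x rfl
        exact ⟨1, map_one φ⟩
    rw [this]
    exact isClosed_singleton
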